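/- Let t ≥ 0 and s_0, s_1, …, s_t be nonnegative integers and let w = 0^{s_0} 1 0^{s_1} 1 ⋯ 1 0^{s_t} (a binary word with exactly t occurrences of the letter 1). Let ℓ, u, m be integers with 0 ≤ ℓ ≤ u ≤ t and m ≥ 0. Then the word 1^ℓ 0^m 1^{t−u} is a subword of w if and only if Σ_{i=ℓ}^{u} s_i ≥ m. -/

import Mathlib

/-- The word `0^{s_0} 1 0^{s_1} 1 ⋯ 1 0^{s_t}` over `{0,1}` (with exactly `t`
occurrences of the letter `1`), where `0` is `false` and `1` is `true`. -/
def blockDecompWord (s : ℕ → ℕ) : ℕ → List Bool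
  | 0 => List.replicate (s 0) false
  | (t + 1) => blockDecompWord s t ++ true :: List.replicate (s (t + 1)) false

lemma blockDecompWord_count_true (s : ℕ → ℕ) (t : ℕ) :
    List.count true (blockDecompWord s t) = t := by
  induction t with
  | zero => simp [blockDecompWord, List.count_replicate]
  | succ t ih => simp [blockDecompWord, List.count_replicate, ih]

/-- Key counting lemma: in any three-way split of the word, the number of `false`s
in the middle part is bounded by the sum of block sizes between the appropriate
indices. -/
lemma blockDecompWord_middle_count (s : ℕ → ℕ) (t : ℕ) :
    ∀ w1 w2 w3 : List Bool, blockDecompWord s t = w1 ++ (w2 ++ w3) →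
      List.count false w2 ≤
        ∑ i ∈ Finset.Icc (List.count true w1)
            (List.count true w1 + List.count true w2), s i := by
  induction t with
  | zero =>
    intro w1 w2 w3 h
    rw [show blockDecompWord s 0 = List.replicate (s 0) false from rfl] at h
    have h1 : List.count true w1 = 0 := by
      have := (List.sublist_append_left w1 (w2 ++ w3)).count_le true
      rw [← h, List.count_replicate] at this
      simpa using this
    have h2 : List.count true w2 = 0 := by
      have : List.Sublist w2 (w1 ++ (w2 ++ w3)) :=
        ((List.sublist_append_left w2 w3).trans (List.sublist_append_right w1 _))
      have := this.count_le true
      rw [← h, List.count_replicate] at this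
      simpa using this
    have hlen : w2.length ≤ s 0 := by
      have := congrArg List.length h
      simp at this
      omega
    have : List.count false w2 ≤ w2.length := List.count_le_length
    simp [h1, h2]
    omega
  | succ t ih =>
    intro w1 w2 w3 h
    rw [blockDecompWord] at h
    set L := blockDecompWord s t with hL
    set R := List.replicate (s (t + 1)) false with hR
    have hcR : List.count true R = 0 := by simp [hR, List.count_replicate]
    have hlR : R.length = s (t + 1) := by simp [hR]
    have hcL : List.count true L = t := blockDecompWord_count_true s t
    have h' : (w1 ++ w2) ++ w3 = L ++ (true :: R) := by rw [List.append_assoc]; exact h.symm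
    rcases List.append_eq_append_iff.mp h' with ⟨a', ha1, ha2⟩ | ⟨c', hc1, hc2⟩
    · -- L = (w1 ++ w2) ++ a',  w3 = a' ++ (true :: R)
      exact ih w1 w2 a' (by rw [ha1]; simp)
    · -- w1 ++ w2 = L ++ c',  true :: R = c' ++ w3
      match c', hc2 with
      | [], hc2 =>
        simp at hc1
        exact ih w1 w2 [] (by simp [← hc1])
      | (x :: a''), hc2 =>
        have hx : x = true := by
          have := congrArg (·.head?) hc2
          simpa using this.symm
        subst hx
        have hRa : R = a'' ++ w3 := by
          have := congrArg List.tail hc2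
          simpa using this
        have hca'' : List.count true a'' = 0 := by
          have := congrArg (List.count true) hRa
          simp [List.count_append] at this
          omega
        have hla'' : a''.length ≤ s (t + 1) := by
          have := congrArg List.length hRa
          simp [List.count_append, hlR] at this
          omega
        rcases List.append_eq_append_iff.mp hc1 with ⟨a₂, hb1, hb2⟩ | ⟨c₂, hd1, hd2⟩
        · -- L = w1 ++ a₂, w2 = a₂ ++ (true :: a'')
          have hcnt : List.count true w1 + List.count true a₂ = t := by
            have := congrArg (List.count true) hb1
            simp [List.count_append, hcL] at this
            omega
          have hIH := ih w1 a₂ [] (by rw [hb1]; simp)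
          have hc2' : List.count true w2 = List.count true a₂ + 1 := by
            rw [hb2]; simp [List.count_append, hca'']
          have hf2 : List.count false w2 = List.count false a₂ + List.count false a'' := by
            rw [hb2]; simp [List.count_append]
          have hfa'' : List.count false a'' ≤ s (t + 1) :=
            le_trans List.count_le_length hla''
          have hle : List.count true w1 ≤ t + 1 := by omega
          rw [hcnt] at hIH
          rw [hc2',
            show List.count true w1 + (List.count true a₂ + 1) = t + 1 from by omega,
            Finset.sum_Icc_succ_top hle]
          omega
        · -- w1 = L ++ c₂, true :: a'' = c₂ ++ w2
          match c₂, hd2 with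
          | [], hd2 =>
            simp at hd2
            have hc1w : List.count true w1 = t := by rw [hd1]; simp [hcL]
            have hc2w : List.count true w2 = 1 := by rw [← hd2]; simp [hca'']
            have hf2 : List.count false w2 ≤ s (t + 1) := by
              rw [← hd2]
              simpa using le_trans (List.count_le_length : List.count false a'' ≤ a''.length) hla''
            rw [hc1w, hc2w, Finset.sum_Icc_succ_top (by omega)]
            omega
          | (y :: c₂''), hd2 =>
            have hy : y = true := by
              have := congrArg (·.head?) hd2
              simpa using this
            subst hy
            have ha''eq : a'' = c₂'' ++ w2 := by
              have := congrArg List.tail hd2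
              simpa using this
            have hcc : List.count true c₂'' = 0 ∧ List.count true w2 = 0 := by
              have := congrArg (List.count true) ha''eq
              simp [List.count_append, hca''] at this
              omega
            have hc1w : List.count true w1 = t + 1 := by
              rw [hd1]; simp [List.count_append, hcL, hcc.1]
            have hlw2 : w2.length ≤ s (t + 1) := by
              have := congrArg List.length ha''eq
              simp at this
              omega
            have hf2 : List.count false w2 ≤ s (t + 1) :=
              le_trans List.count_le_length hlw2
            rw [hc1w, hcc.2]
            simpa using hf2

/-- `1^t` is a subword of the block word. -/
lemma replicate_true_sublist (s : ℕ → ℕ) (t : ℕ) :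
    List.Sublist (List.replicate t true) (blockDecompWord s t) := by
  induction t with
  | zero => simp [blockDecompWord]
  | succ t ih =>
    rw [blockDecompWord, List.replicate_succ']
    exact List.Sublist.append ih (by simp)

/-- Construction: the canonical pattern with the full sum of zeros is a subword. -/
lemma pattern_sublist (s : ℕ → ℕ) (ℓ : ℕ) :
    ∀ t u : ℕ, ℓ ≤ u → u ≤ t →
      List.Sublist
        (List.replicate ℓ true ++ List.replicate (∑ i ∈ Finset.Icc ℓ u, s i) false ++
          List.replicate (t - u) true)
        (blockDecompWord s t) := by
  intro t
  induction t with
  | zero =>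
    intro u hℓu hut
    interval_cases u
    interval_cases ℓ
    simp [blockDecompWord, Finset.Icc_self]
  | succ t ih =>
    intro u hℓu hut
    rw [blockDecompWord]
    rcases Nat.lt_or_ge u (t + 1) with hu | hu
    · -- u ≤ t
      have hut' : u ≤ t := by omega
      have hrep : List.replicate (t + 1 - u) true
          = List.replicate (t - u) true ++ [true] := by
        rw [← List.replicate_succ']
        congr 1
        omega
      rw [hrep, ← List.append_assoc]
      refine List.Sublist.trans ?_
        (List.Sublist.append (l₂ := blockDecompWord s t)
          (r₁ := [true]) (r₂ := true :: List.replicate (s (t+1)) false)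
          (List.Sublist.refl _) ?_)
      · exact List.Sublist.append (ih u hℓu hut') (List.Sublist.refl _)
      · simp
    · -- u = t + 1
      have hu' : u = t + 1 := by omega
      subst hu'
      simp only [Nat.sub_self, List.replicate_zero, List.append_nil]
      rcases Nat.lt_or_ge ℓ (t + 1) with hℓ | hℓ
      · have hℓt : ℓ ≤ t := by omega
        rw [Finset.sum_Icc_succ_top (by omega), List.replicate_add, ← List.append_assoc]
        refine List.Sublist.append ?_ (by simp)
        have := ih t hℓt le_rfl
        simpa using this
      · have hℓ' : ℓ = t + 1 := by omega
        subst hℓ'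
        rw [Finset.Icc_self, Finset.sum_singleton, List.replicate_succ']
        rw [List.append_assoc]
        exact List.Sublist.append (replicate_true_sublist s t) (by simp)

/-- For `w = 0^{s_0} 1 0^{s_1} 1 ⋯ 1 0^{s_t}` and `0 ≤ ℓ ≤ u ≤ t`, the word
`1^ℓ 0^m 1^{t−u}` is a subword of `w` if and only if `∑_{i=ℓ}^{u} s_i ≥ m`. -/
theorem subword_block_iff_sum_ge (t : ℕ) (s : ℕ → ℕ) (ℓ u m : ℕ)
    (hℓu : ℓ ≤ u) (hut : u ≤ t) :
    List.Sublist
        (List.replicate ℓ true ++ List.replicate m false ++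
          List.replicate (t - u) true)
        (blockDecompWord s t) ↔
      m ≤ ∑ i ∈ Finset.Icc ℓ u, s i := by
  constructor
  · intro h
    obtain ⟨r1, r2, hw, h12, h3⟩ := List.append_sublist_iff.mp h
    obtain ⟨q1, q2, hr, h1, h2⟩ := List.append_sublist_iff.mp h12
    subst hr
    have hw' : blockDecompWord s t = q1 ++ (q2 ++ r2) := by rw [hw]; simp
    have key := blockDecompWord_middle_count s t q1 q2 r2 hw'
    have hq1 : ℓ ≤ List.count true q1 := by
      have := h1.count_le true
      simpa using this
    have hq2 : m ≤ List.count false q2 := by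
      have := h2.count_le false
      simpa using this
    have hr2 : t - u ≤ List.count true r2 := by
      have := h3.count_le true
      simpa using this
    have htot : List.count true q1 + List.count true q2 + List.count true r2 = t := by
      have := congrArg (List.count true) hw'
      simp [List.count_append, blockDecompWord_count_true] at this
      omega
    have hsub : Finset.Icc (List.count true q1)
        (List.count true q1 + List.count true q2) ⊆ Finset.Icc ℓ u :=
      Finset.Icc_subset_Icc hq1 (by omega)
    calc m ≤ List.count false q2 := hq2
      _ ≤ _ := key
      _ ≤ ∑ i ∈ Finset.Icc ℓ u, s i :=
        Finset.sum_le_sum_of_subset hsub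
  · intro h
    refine List.Sublist.trans ?_ (pattern_sublist s ℓ t u hℓu hut)
    exact List.Sublist.append
      (List.Sublist.append (List.Sublist.refl _)
        ((List.replicate_sublist_replicate false).mpr h))
      (List.Sublist.refl _)
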